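/- arXiv:1111.6112 — 2 statements merged into one kernel-verified Lean document; each statement's English description precedes it below -/
import Mathlib

section
/- Let R be an irreducible affine root system, Δ = (a_0,...,a_n) an ordered basis, and S := {i ∈ {0,...,n} : (ZR, a_i^∨) = 2Z} the set of indices of simple roots a with (ZR, a^∨) ⊆ 2Z. Then S has cardinality at most 2. -/
set_option linter.unusedSectionVars false
set_option maxHeartbeats 1000000

open scoped RealInnerProductSpace
noncomputable section

abbrev EV (n : ℕ) := EuclideanSpace ℝ (Fin n)

section XX

variable {V : Type*} [NormedAddCommGroup V] [InnerProductSpace ℝ V]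
variable {ι : Type*} [DecidableEq ι]

lemma ipos (x : V) (hx : x ≠ 0) : 0 < ⟪x, x⟫ :=
  lt_of_le_of_ne real_inner_self_nonneg (fun he => hx (inner_self_eq_zero.1 he.symm))

lemma parallel_of_cs_eq (x y : V) (hx : x ≠ 0)
    (h : ⟪x, y⟫ * ⟪x, y⟫ = ⟪x, x⟫ * ⟪y, y⟫) : y = (⟪x, y⟫ / ⟪x, x⟫) • x := by
  have hxx : 0 < ⟪x, x⟫ := ipos x hx
  have key : ⟪y - (⟪x, y⟫ / ⟪x, x⟫) • x, y - (⟪x, y⟫ / ⟪x, x⟫) • x⟫ = 0 := by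
    simp only [inner_sub_left, inner_sub_right, real_inner_smul_left, real_inner_smul_right,
      real_inner_comm x y]
    field_simp
    ring_nf
    nlinarith [h]
  exact sub_eq_zero.1 (inner_self_eq_zero.1 key)

lemma posPart (I : Finset ι) (v : ι → V)
    (hnp : ∀ a ∈ I, ∀ b ∈ I, a ≠ b → ⟪v a, v b⟫ ≤ 0)
    (hconn : ∀ A ⊆ I, (∀ a ∈ A, ∀ b ∈ I, b ∉ A → ⟪v a, v b⟫ = 0) → A = ∅ ∨ A = I)
    (x : ι → ℝ) (hx : ∑ a ∈ I, x a • v a = 0) :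
    I.filter (fun a => 0 < x a) = ∅ ∨ I.filter (fun a => 0 < x a) = I := by
  classical
  set P := I.filter (fun a => 0 < x a) with hP
  set N := I.filter (fun a => ¬ 0 < x a) with hN
  have hPI : P ⊆ I := Finset.filter_subset _ _
  have hsplit : (∑ a ∈ P, x a • v a) + ∑ a ∈ N, x a • v a = 0 := by
    rw [hP, hN, Finset.sum_filter_add_sum_filter_not]; exact hx
  set u := ∑ a ∈ P, x a • v a with hu
  have hun : u = ∑ b ∈ N, (-x b) • v b := by
    have h9 : u = -∑ a ∈ N, x a • v a := by
      rw [eq_neg_iff_add_eq_zero]; exact hsplit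
    rw [h9, ← Finset.sum_neg_distrib]
    exact Finset.sum_congr rfl (fun b _ => by rw [neg_smul])
  have hterm : ∀ a ∈ P, ∀ b ∈ N, x a * (-x b) * ⟪v a, v b⟫ ≤ 0 := by
    intro a ha b hb
    have hxa : 0 < x a := (Finset.mem_filter.1 ha).2
    have hxb : ¬ 0 < x b := (Finset.mem_filter.1 hb).2
    have hab : a ≠ b := fun he => hxb (he ▸ hxa)
    have hip : ⟪v a, v b⟫ ≤ 0 :=
      hnp a ((Finset.filter_subset _ _) ha) b ((Finset.filter_subset _ _) hb) hab
    have : 0 ≤ x a * (-x b) := mul_nonneg hxa.le (by linarith [not_lt.1 hxb])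
    exact mul_nonpos_of_nonneg_of_nonpos this hip
  have huu : ⟪u, u⟫ ≤ 0 := by
    have hexp : ⟪(∑ a ∈ P, x a • v a : V), ∑ b ∈ N, (-x b) • v b⟫
        = ∑ a ∈ P, ∑ b ∈ N, x a * (-x b) * ⟪v a, v b⟫ := by
      rw [sum_inner]
      refine Finset.sum_congr rfl (fun a _ => ?_)
      rw [inner_sum]
      refine Finset.sum_congr rfl (fun b _ => ?_)
      rw [real_inner_smul_left, real_inner_smul_right]; ring
    calc ⟪u, u⟫ = ⟪(∑ a ∈ P, x a • v a : V), ∑ b ∈ N, (-x b) • v b⟫ := by rw [← hu, ← hun]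
      _ = ∑ a ∈ P, ∑ b ∈ N, x a * (-x b) * ⟪v a, v b⟫ := hexp
      _ ≤ 0 := Finset.sum_nonpos (fun a ha => Finset.sum_nonpos (fun b hb => hterm a ha b hb))
  have hu0 : u = 0 :=
    inner_self_eq_zero.1 (le_antisymm huu real_inner_self_nonneg)
  apply hconn P hPI
  intro a ha b hbI hbP
  have hzero : (0:ℝ) = ∑ c ∈ P, x c * ⟪v c, v b⟫ := by
    have h7 : ⟪u, v b⟫ = 0 := by rw [hu0, inner_zero_left]
    rw [← h7, hu, sum_inner]
    exact Finset.sum_congr rfl (fun c _ => by rw [real_inner_smul_left])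
  have htm : ∀ c ∈ P, x c * ⟪v c, v b⟫ ≤ 0 := by
    intro c hc
    have hxc : 0 < x c := (Finset.mem_filter.1 hc).2
    have hcb : c ≠ b := fun he => hbP (he ▸ hc)
    exact mul_nonpos_of_nonneg_of_nonpos hxc.le (hnp c (hPI hc) b hbI hcb)
  have hz := (Finset.sum_eq_zero_iff_of_nonpos htm).1 hzero.symm a ha
  have hxa : 0 < x a := (Finset.mem_filter.1 ha).2
  rcases mul_eq_zero.1 hz with h | h
  · exact absurd h hxa.ne'
  · exact h

lemma full_support (I : Finset ι) (v : ι → V)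
    (hnp : ∀ a ∈ I, ∀ b ∈ I, a ≠ b → ⟪v a, v b⟫ ≤ 0)
    (hconn : ∀ A ⊆ I, (∀ a ∈ A, ∀ b ∈ I, b ∉ A → ⟪v a, v b⟫ = 0) → A = ∅ ∨ A = I)
    (x : ι → ℝ) (hx : ∑ a ∈ I, x a • v a = 0) (hne : ∃ a ∈ I, x a ≠ 0) :
    (∀ a ∈ I, 0 < x a) ∨ (∀ a ∈ I, x a < 0) := by
  classical
  have h1 := posPart I v hnp hconn x hx
  have h2 := posPart I v hnp hconn (fun a => -x a) (by
    have h8 : ∑ a ∈ I, (-x a) • v a = -∑ a ∈ I, x a • v a := by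
      rw [← Finset.sum_neg_distrib]
      exact Finset.sum_congr rfl (fun a _ => by rw [neg_smul])
    simpa [h8] using hx)
  rcases h1 with h1 | h1
  · rcases h2 with h2 | h2
    · exfalso
      obtain ⟨a, haI, hax⟩ := hne
      rcases lt_or_gt_of_ne hax with h | h
      · have h3 : a ∈ I.filter (fun a => 0 < -x a) := Finset.mem_filter.2 ⟨haI, by linarith⟩
        rw [show I.filter (fun a => 0 < -x a) = ∅ from h2] at h3
        exact absurd h3 (Finset.notMem_empty a)
      · have h3 : a ∈ I.filter (fun a => 0 < x a) := Finset.mem_filter.2 ⟨haI, h⟩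
        rw [h1] at h3; exact absurd h3 (Finset.notMem_empty a)
    · right; intro a haI
      have h3 : a ∈ I.filter (fun a => 0 < -x a) := by
        rw [show I.filter (fun a => 0 < -x a) = I from h2]; exact haI
      have := (Finset.mem_filter.1 h3).2
      linarith
  · left; intro a haI
    have h3 : a ∈ I.filter (fun a => 0 < x a) := by rw [h1]; exact haI
    exact (Finset.mem_filter.1 h3).2

theorem lemB : ∀ (m : ℕ) (I : Finset ι) (v : ι → V), I.card ≤ m →
    (∀ a ∈ I, v a ≠ 0) →
    (∀ a ∈ I, ∀ b ∈ I, a ≠ b → ⟪v a, v b⟫ ≤ 0) →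
    (∀ a ∈ I, ∀ b ∈ I, ∃ z : ℤ, 2 * ⟪v a, v b⟫ = z * ⟪v b, v b⟫) →
    (∀ A ⊆ I, (∀ a ∈ A, ∀ b ∈ I, b ∉ A → ⟪v a, v b⟫ = 0) → A = ∅ ∨ A = I) →
    (∃ t : ι → ℝ, ∑ a ∈ I, t a • v a = 0 ∧ ∃ a ∈ I, t a ≠ 0) →
    ∀ i ∈ I, ∀ j ∈ I, ∀ k ∈ I,
    (∀ a ∈ I, ∃ z : ℤ, ⟪v a, v i⟫ = z * ⟪v i, v i⟫) →
    (∀ a ∈ I, ∃ z : ℤ, ⟪v a, v j⟫ = z * ⟪v j, v j⟫) →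
    (∀ a ∈ I, ∃ z : ℤ, ⟪v a, v k⟫ = z * ⟪v k, v k⟫) →
    i = j ∨ i = k ∨ j = k := by
  intro m
  induction m with
  | zero =>
    intro I v hcard _ _ _ _ _ i hi j _ k _ _ _ _
    rw [Nat.le_zero, Finset.card_eq_zero] at hcard
    rw [hcard] at hi
    exact absurd hi (Finset.notMem_empty i)
  | succ m IH =>
    intro I v hcard hnz hnp hcrys hconn hdep i hi j hj k hk hei hej hek
    by_contra hcon
    push_neg at hcon
    obtain ⟨hij, hik, hjk⟩ := hcon
    classical
    have hip : ∀ a ∈ I, 0 < ⟪v a, v a⟫ := fun a ha => ipos _ (hnz a ha)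
    -- a pair of parallel vectors disconnects
    have hpar : ∀ s ∈ I, ∀ p ∈ I, ∀ w ∈ I, p ≠ s → w ≠ s → w ≠ p →
        ∀ μ : ℝ, μ < 0 → v p = μ • v s → False := by
      intro s hs p hp w hw hps hws hwp μ hμ hvp
      have hsub : ({s, p} : Finset ι) ⊆ I := by
        intro x hx
        rcases Finset.mem_insert.1 hx with h | h
        · rw [h]; exact hs
        · rw [Finset.mem_singleton.1 h]; exact hp
      have hcr : ∀ a ∈ ({s, p} : Finset ι), ∀ b ∈ I, b ∉ ({s, p} : Finset ι) → ⟪v a, v b⟫ = 0 := by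
        intro a ha b hbI hbA
        have hbs : b ≠ s := fun he => hbA (by rw [he]; exact Finset.mem_insert_self s {p})
        have hbp : b ≠ p := fun he => hbA (by rw [he]; exact Finset.mem_insert_of_mem (Finset.mem_singleton_self p))
        have h1 : ⟪v s, v b⟫ ≤ 0 := hnp s hs b hbI (fun he => hbs he.symm)
        have h2 : ⟪v p, v b⟫ ≤ 0 := hnp p hp b hbI (fun he => hbp he.symm)
        have h2' : ⟪v p, v b⟫ = μ * ⟪v s, v b⟫ := by rw [hvp, real_inner_smul_left]
        have hsb0 : ⟪v s, v b⟫ = 0 := by nlinarith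
        rcases Finset.mem_insert.1 ha with h | h
        · rw [h]; exact hsb0
        · rw [Finset.mem_singleton.1 h, h2', hsb0, mul_zero]
      rcases hconn {s, p} hsub hcr with h | h
      · have : s ∈ ({s, p} : Finset ι) := Finset.mem_insert_self s {p}
        rw [h] at this; exact absurd this (Finset.notMem_empty s)
      · have : w ∈ ({s, p} : Finset ι) := by rw [h]; exact hw
        rcases Finset.mem_insert.1 this with h' | h'
        · exact hws h'
        · exact hwp (Finset.mem_singleton.1 h')
    -- two "even" vertices are orthogonal
    have horth : ∀ s ∈ I, ∀ u ∈ I, ∀ w ∈ I, s ≠ u → w ≠ s → w ≠ u →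
        (∀ a ∈ I, ∃ z : ℤ, ⟪v a, v s⟫ = z * ⟪v s, v s⟫) →
        (∀ a ∈ I, ∃ z : ℤ, ⟪v a, v u⟫ = z * ⟪v u, v u⟫) →
        ⟪v s, v u⟫ = 0 := by
      intro s hs u hu w hw hsu hws hwu hes heu
      by_contra h0
      have hlt : ⟪v s, v u⟫ < 0 := lt_of_le_of_ne (hnp s hs u hu hsu) h0
      obtain ⟨z, hz⟩ := heu s hs
      obtain ⟨z', hz'⟩ := hes u hu
      have hus : ⟪v u, v s⟫ = ⟪v s, v u⟫ := real_inner_comm (v s) (v u)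
      rw [hus] at hz'
      have hipu := hip u hu
      have hips := hip s hs
      have hz1 : (z:ℝ) ≤ -1 := by
        have hzn : (z:ℝ) < 0 := by nlinarith
        have : z < 0 := by exact_mod_cast hzn
        have : z ≤ -1 := by omega
        exact_mod_cast this
      have hz'1 : (z':ℝ) ≤ -1 := by
        have hzn : (z':ℝ) < 0 := by nlinarith
        have : z' < 0 := by exact_mod_cast hzn
        have : z' ≤ -1 := by omega
        exact_mod_cast this
      have hcs := real_inner_mul_inner_self_le (v s) (v u)
      have hsq : ⟪v s, v u⟫ * ⟪v s, v u⟫ = ((z:ℝ) * ⟪v u, v u⟫) * ((z':ℝ) * ⟪v s, v s⟫) := by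
        rw [← hz, ← hz']
      have hzz : (1:ℝ) ≤ (z:ℝ) * (z':ℝ) := by nlinarith [hz1, hz'1]
      have heq : ⟪v s, v u⟫ * ⟪v s, v u⟫ = ⟪v s, v s⟫ * ⟪v u, v u⟫ := by
        nlinarith [hsq, hcs, hzz, mul_pos hips hipu]
      have hparallel := parallel_of_cs_eq (v s) (v u) (hnz s hs) heq
      exact hpar s hs u hu w hw hsu.symm hws hwu (⟪v s, v u⟫ / ⟪v s, v s⟫)
        (div_neg_of_neg_of_pos hlt hips) hparallel
    have hij0 : ⟪v i, v j⟫ = 0 := horth i hi j hj k hk hij (Ne.symm hik) (Ne.symm hjk) hei hej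
    have hik0 : ⟪v i, v k⟫ = 0 := horth i hi k hk j hj hik (Ne.symm hij) hjk hei hek
    have hjk0 : ⟪v j, v k⟫ = 0 := horth j hj k hk i hi hjk hij hik hej hek
    have hji0 : ⟪v j, v i⟫ = 0 := (real_inner_comm (v i) (v j)).trans hij0
    have hki0 : ⟪v k, v i⟫ = 0 := (real_inner_comm (v i) (v k)).trans hik0
    -- neighbour structure at i
    have hnbr : ∀ p ∈ I, p ≠ i → ⟪v p, v i⟫ ≠ 0 →
        ⟪v p, v i⟫ = -⟪v i, v i⟫ ∧ ⟪v p, v p⟫ = 2 * ⟪v i, v i⟫ := by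
      intro p hp hpi h0
      have hpj : p ≠ j := fun he => h0 (he ▸ hji0)
      have hlt : ⟪v p, v i⟫ < 0 := lt_of_le_of_ne (hnp p hp i hi hpi) h0
      obtain ⟨z, hz⟩ := hei p hp
      obtain ⟨z', hz'⟩ := hcrys i hi p hp
      have hipp := hip p hp
      have hipi := hip i hi
      have hcomm : ⟪v i, v p⟫ = ⟪v p, v i⟫ := real_inner_comm (v p) (v i)
      rw [hcomm] at hz'
      have hz1 : z ≤ -1 := by
        have hzn : (z:ℝ) < 0 := by nlinarith
        have : z < 0 := by exact_mod_cast hzn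
        omega
      have hz'1 : z' ≤ -1 := by
        have hzn : (z':ℝ) < 0 := by nlinarith
        have : z' < 0 := by exact_mod_cast hzn
        omega
      have hcs := real_inner_mul_inner_self_le (v p) (v i)
      have hsq : 2 * (⟪v p, v i⟫ * ⟪v p, v i⟫) = ((z:ℝ) * ⟪v i, v i⟫) * ((z':ℝ) * ⟪v p, v p⟫) := by
        rw [← hz, ← hz']; ring
      have hzz2 : (z : ℤ) * z' ≤ 2 := by
        have : ((z * z' : ℤ) : ℝ) ≤ 2 := by push_cast; nlinarith [hcs, hipp, hipi, hsq, mul_pos hipi hipp]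
        exact_mod_cast this
      -- case analysis on (z, z')
      have hcases : (z = -1 ∧ z' = -1) ∨ ((z:ℤ) * z' = 2) := by
        rcases (by omega : z = -1 ∨ z ≤ -2) with h1 | h1 <;>
          rcases (by omega : z' = -1 ∨ z' ≤ -2) with h2 | h2
        · exact Or.inl ⟨h1, h2⟩
        · right; nlinarith
        · right; nlinarith
        · exfalso; nlinarith
      rcases hcases with ⟨hza, hzb⟩ | hzz
      · constructor
        · rw [hz, hza]; push_cast; ring
        · rw [hza] at hz
          rw [hzb] at hz'
          push_cast at hz hz'
          linarith
      · exfalso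
        have hzzr : ((z:ℝ)) * ((z':ℝ)) = 2 := by exact_mod_cast hzz
        have heq : ⟪v p, v i⟫ * ⟪v p, v i⟫ = ⟪v p, v p⟫ * ⟪v i, v i⟫ := by nlinarith [hsq]
        have hparallel := parallel_of_cs_eq (v p) (v i) (hnz p hp) heq
        exact hpar p hp i hi j hj hpi.symm (Ne.symm hpj) (Ne.symm hij) (⟪v p, v i⟫ / ⟪v p, v p⟫)
          (div_neg_of_neg_of_pos hlt hipp) hparallel
    -- i cannot have two distinct neighbours
    have huniq : ∀ p ∈ I, ∀ q ∈ I, p ≠ i → q ≠ i → p ≠ q →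
        ⟪v p, v i⟫ ≠ 0 → ⟪v q, v i⟫ ≠ 0 → False := by
      intro p hp q hq hpi hqi hpq hp0 hq0
      obtain ⟨hpi1, hpi2⟩ := hnbr p hp hpi hp0
      obtain ⟨hqi1, hqi2⟩ := hnbr q hq hqi hq0
      have hpq0 : ⟪v p, v q⟫ ≤ 0 := hnp p hp q hq hpq
      have hipi := hip i hi
      set γ := v p + (2:ℝ) • v i with hγ
      have hγγ : ⟪γ, γ⟫ = 2 * ⟪v i, v i⟫ := by
        simp only [hγ, inner_add_left, inner_add_right, real_inner_smul_left,
          real_inner_smul_right, real_inner_comm (v p) (v i)]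
        rw [hpi1, hpi2]; ring
      have hγq : ⟪γ, v q⟫ = ⟪v p, v q⟫ - 2 * ⟪v i, v i⟫ := by
        simp only [hγ, inner_add_left, real_inner_smul_left, real_inner_comm (v q) (v i)]
        rw [hqi1]; ring
      have hcs := real_inner_mul_inner_self_le γ (v q)
      have hcs' : (⟪v p, v q⟫ - 2 * ⟪v i, v i⟫) * (⟪v p, v q⟫ - 2 * ⟪v i, v i⟫)
          ≤ (2 * ⟪v i, v i⟫) * ⟪v q, v q⟫ := by rw [← hγq, ← hγγ]; exact hcs
      rw [hqi2] at hcs'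
      have h1 : ⟪v p, v q⟫ = 0 := le_antisymm hpq0 (by nlinarith [hcs', hipi, hpq0, mul_self_nonneg (⟪v p, v q⟫ : ℝ), mul_pos hipi hipi])
      have hγne : γ ≠ 0 := by
        intro h
        have h2 : (0:ℝ) = 2 * ⟪v i, v i⟫ := by rw [← hγγ, h, inner_zero_left]
        linarith
      have heq2 : ⟪γ, v q⟫ * ⟪γ, v q⟫ = ⟪γ, γ⟫ * ⟪v q, v q⟫ := by
        rw [hγγ, hγq, h1, hqi2]; ring
      have hpar2 := parallel_of_cs_eq γ (v q) hγne heq2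
      have hco : ⟪γ, v q⟫ / ⟪γ, γ⟫ = -1 := by
        rw [hγγ, hγq, h1]
        field_simp
        ring
      rw [hco] at hpar2
      have hrel : v p + (2:ℝ) • v i + v q = 0 := by
        rw [hpar2, hγ]
        module
      -- build the coefficient vector
      set x : ι → ℝ := fun a =>
        (if a = p then 1 else 0) + (if a = i then 2 else 0) + (if a = q then 1 else 0) with hxdef
      have hxsum : ∑ a ∈ I, x a • v a = v p + (2:ℝ) • v i + v q := by
        simp only [hxdef, add_smul]
        rw [Finset.sum_add_distrib, Finset.sum_add_distrib]
        have e1 : ∑ a ∈ I, (if a = p then (1:ℝ) else 0) • v a = v p := by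
          rw [Finset.sum_congr rfl (fun a _ => show (if a = p then (1:ℝ) else 0) • v a
            = if a = p then v a else 0 by split_ifs <;> simp)]
          rw [Finset.sum_ite_eq' I p (fun a => v a), if_pos hp]
        have e2 : ∑ a ∈ I, (if a = i then (2:ℝ) else 0) • v a = (2:ℝ) • v i := by
          rw [Finset.sum_congr rfl (fun a _ => show (if a = i then (2:ℝ) else 0) • v a
            = if a = i then (2:ℝ) • v a else 0 by split_ifs <;> simp)]
          rw [Finset.sum_ite_eq' I i (fun a => (2:ℝ) • v a), if_pos hi]
        have e3 : ∑ a ∈ I, (if a = q then (1:ℝ) else 0) • v a = v q := by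
          rw [Finset.sum_congr rfl (fun a _ => show (if a = q then (1:ℝ) else 0) • v a
            = if a = q then v a else 0 by split_ifs <;> simp)]
          rw [Finset.sum_ite_eq' I q (fun a => v a), if_pos hq]
        rw [e1, e2, e3]
      have hxi : x i = 2 := by
        simp [hxdef, Ne.symm hpi, Ne.symm hqi]
      have hfs := full_support I v hnp hconn x (by rw [hxsum]; exact hrel)
        ⟨i, hi, by rw [hxi]; norm_num⟩
      have hjp : j ≠ p := fun he => hp0 (by rw [← he]; exact hji0)
      have hjq : j ≠ q := fun he => hq0 (by rw [← he]; exact hji0)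
      have hxj : x j = 0 := by
        simp [hxdef, hjp, Ne.symm hij, hjq]
      rcases hfs with h | h
      · have := h j hj; rw [hxj] at this; exact lt_irrefl 0 this
      · have := h j hj; rw [hxj] at this; exact lt_irrefl 0 this
    -- i has a neighbour
    have hnex : ∃ p ∈ I, p ≠ i ∧ ⟪v p, v i⟫ ≠ 0 := by
      by_contra hcon2
      push_neg at hcon2
      have hcr : ∀ a ∈ ({i} : Finset ι), ∀ b ∈ I, b ∉ ({i} : Finset ι) → ⟪v a, v b⟫ = 0 := by
        intro a ha b hbI hbA
        rw [Finset.mem_singleton.1 ha]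
        have hbi : b ≠ i := fun he => hbA (by rw [he]; exact Finset.mem_singleton_self i)
        rw [real_inner_comm]
        exact hcon2 b hbI hbi
      rcases hconn {i} (by simpa using hi) hcr with h | h
      · exact absurd h (Finset.singleton_ne_empty i)
      · have : j ∈ ({i} : Finset ι) := by rw [h]; exact hj
        exact hij (Finset.mem_singleton.1 this).symm
    obtain ⟨p, hp, hpi, hp0⟩ := hnex
    obtain ⟨hpi1, hpi2⟩ := hnbr p hp hpi hp0
    have hipi := hip i hi
    -- i is pendant with unique neighbour p
    have hpend : ∀ a ∈ I, a ≠ i → a ≠ p → ⟪v a, v i⟫ = 0 := by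
      intro a ha hai hap
      by_contra h0
      exact huniq a ha p hp hai hpi hap h0 hp0
    have hjp : j ≠ p := fun he => hp0 (by rw [← he]; exact hji0)
    have hkp : k ≠ p := fun he => hp0 (by rw [← he]; exact hki0)
    -- positive kernel vector
    obtain ⟨t, ht, htne⟩ := hdep
    obtain ⟨t', ht'sum, ht'pos⟩ : ∃ t' : ι → ℝ,
        (∑ a ∈ I, t' a • v a = 0) ∧ ∀ a ∈ I, 0 < t' a := by
      rcases full_support I v hnp hconn t ht htne with h | h
      · exact ⟨t, ht, h⟩
      · refine ⟨fun a => -t a, ?_, fun a ha => by have := h a ha; simpa using this⟩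
        have h8 : ∑ a ∈ I, (-t a) • v a = -∑ a ∈ I, t a • v a := by
          rw [← Finset.sum_neg_distrib]
          exact Finset.sum_congr rfl (fun a _ => by rw [neg_smul])
        rw [h8, ht, neg_zero]
    have tip : t' i = t' p := by
      have h7 : ⟪∑ a ∈ I, t' a • v a, v i⟫ = 0 := by rw [ht'sum, inner_zero_left]
      rw [sum_inner] at h7
      have h0' : ∑ a ∈ I, t' a * ⟪v a, v i⟫ = 0 := by
        rw [← h7]
        exact Finset.sum_congr rfl (fun a _ => by rw [real_inner_smul_left])
      have hsub : ({i, p} : Finset ι) ⊆ I := by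
        intro x hx
        rcases Finset.mem_insert.1 hx with h | h
        · rw [h]; exact hi
        · rw [Finset.mem_singleton.1 h]; exact hp
      have hvan : ∀ a ∈ I, a ∉ ({i, p} : Finset ι) → t' a * ⟪v a, v i⟫ = 0 := by
        intro a ha han
        have hai : a ≠ i := fun he => han (by rw [he]; exact Finset.mem_insert_self i {p})
        have hap : a ≠ p := fun he =>
          han (by rw [he]; exact Finset.mem_insert_of_mem (Finset.mem_singleton_self p))
        rw [hpend a ha hai hap, mul_zero]
      have hps : ∑ a ∈ ({i, p} : Finset ι), t' a * ⟪v a, v i⟫ = ∑ a ∈ I, t' a * ⟪v a, v i⟫ :=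
        Finset.sum_subset hsub hvan
      rw [Finset.sum_pair (Ne.symm hpi)] at hps
      rw [h0'] at hps
      rw [hpi1] at hps
      have h9 : (t' i - t' p) * ⟪v i, v i⟫ = 0 := by linarith [hps]
      rcases mul_eq_zero.1 h9 with h | h
      · linarith
      · exact absurd h (ne_of_gt hipi)
    -- projection along the pendant vertex i
    set I' := I.erase i with hI'
    set w : ι → V := fun a => if a = p then v p + v i else v a with hw
    have hpI' : p ∈ I' := Finset.mem_erase.2 ⟨hpi, hp⟩
    have hjI' : j ∈ I' := Finset.mem_erase.2 ⟨Ne.symm hij, hj⟩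
    have hkI' : k ∈ I' := Finset.mem_erase.2 ⟨Ne.symm hik, hk⟩
    have hI'I : ∀ a ∈ I', a ∈ I := fun a ha => Finset.mem_of_mem_erase ha
    have hI'i : ∀ a ∈ I', a ≠ i := fun a ha => (Finset.mem_erase.1 ha).1
    have hwp : w p = v p + v i := by rw [hw]; simp
    have hwa : ∀ a, a ≠ p → w a = v a := fun a ha => by rw [hw]; simp [ha]
    have hwpp : ⟪w p, w p⟫ = ⟪v i, v i⟫ := by
      rw [hwp, real_inner_add_add_self, hpi1, hpi2]; ring
    have hpcomm : ∀ b, ⟪v i, v b⟫ = ⟪v b, v i⟫ := fun b => real_inner_comm (v b) (v i)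
    have hcross : ∀ a ∈ I', ∀ b ∈ I', a ≠ b → ⟪w a, w b⟫ = ⟪v a, v b⟫ := by
      intro a ha b hb hab
      by_cases hap : a = p
      · subst hap
        rw [hwp, hwa b (Ne.symm hab), inner_add_left, hpcomm,
          hpend b (hI'I b hb) (hI'i b hb) (Ne.symm hab), add_zero]
      · by_cases hbp : b = p
        · subst hbp
          rw [hwa a hap, hwp, inner_add_right,
            hpend a (hI'I a ha) (hI'i a ha) hap, add_zero]
        · rw [hwa a hap, hwa b hbp]
    have hcard' : I'.card ≤ m := by
      rw [hI', Finset.card_erase_of_mem hi]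
      omega
    have hnz' : ∀ a ∈ I', w a ≠ 0 := by
      intro a ha
      by_cases hap : a = p
      · subst hap
        intro h
        rw [h, inner_zero_left] at hwpp
        exact absurd hwpp.symm (ne_of_gt hipi)
      · rw [hwa a hap]; exact hnz a (hI'I a ha)
    have hnp' : ∀ a ∈ I', ∀ b ∈ I', a ≠ b → ⟪w a, w b⟫ ≤ 0 := by
      intro a ha b hb hab
      rw [hcross a ha b hb hab]
      exact hnp a (hI'I a ha) b (hI'I b hb) hab
    have hcrys' : ∀ a ∈ I', ∀ b ∈ I', ∃ z : ℤ, 2 * ⟪w a, w b⟫ = z * ⟪w b, w b⟫ := by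
      intro a ha b hb
      by_cases hab : a = b
      · exact ⟨2, by subst hab; push_cast; ring⟩
      · by_cases hbp : b = p
        · rw [hbp] at hb hab ⊢
          obtain ⟨z, hz⟩ := hcrys a (hI'I a ha) p hp
          refine ⟨2 * z, ?_⟩
          rw [hcross a ha p hb hab, hwpp]
          rw [hpi2] at hz
          push_cast
          linarith
        · obtain ⟨z, hz⟩ := hcrys a (hI'I a ha) b (hI'I b hb)
          refine ⟨z, ?_⟩
          rw [hcross a ha b hb hab, hwa b hbp]
          exact hz
    have hconn' : ∀ A ⊆ I', (∀ a ∈ A, ∀ b ∈ I', b ∉ A → ⟪w a, w b⟫ = 0) → A = ∅ ∨ A = I' := by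
      intro A hA hAc
      by_cases hpA : p ∈ A
      · -- lift with i added
        have hsub : insert i A ⊆ I := by
          intro x hx
          rcases Finset.mem_insert.1 hx with h | h
          · rw [h]; exact hi
          · exact hI'I x (hA h)
        have hcr : ∀ a ∈ insert i A, ∀ b ∈ I, b ∉ insert i A → ⟪v a, v b⟫ = 0 := by
          intro a ha b hbI hbA
          have hbi : b ≠ i := fun he => hbA (by rw [he]; exact Finset.mem_insert_self i A)
          have hbA' : b ∉ A := fun h => hbA (Finset.mem_insert_of_mem h)
          have hbp : b ≠ p := fun he => hbA' (by rw [he]; exact hpA)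
          have hbI' : b ∈ I' := Finset.mem_erase.2 ⟨hbi, hbI⟩
          rcases Finset.mem_insert.1 ha with h | h
          · rw [h, hpcomm]
            exact hpend b hbI hbi hbp
          · have haI' : a ∈ I' := hA h
            have hab : a ≠ b := fun he => hbA' (he ▸ h)
            rw [← hcross a haI' b hbI' hab]
            exact hAc a h b hbI' hbA'
        rcases hconn (insert i A) hsub hcr with h | h
        · exact absurd h (Finset.insert_ne_empty i A)
        · right
          apply Finset.Subset.antisymm (hA)
          intro x hx
          have hxi : x ≠ i := hI'i x hx
          have : x ∈ insert i A := by rw [h]; exact hI'I x hx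
          rcases Finset.mem_insert.1 this with h' | h'
          · exact absurd h' hxi
          · exact h'
      · -- p ∉ A : lift A directly
        have hsub : A ⊆ I := fun x hx => hI'I x (hA hx)
        have hcr : ∀ a ∈ A, ∀ b ∈ I, b ∉ A → ⟪v a, v b⟫ = 0 := by
          intro a ha b hbI hbA
          have hap : a ≠ p := fun he => hpA (he ▸ ha)
          by_cases hbi : b = i
          · subst hbi
            exact hpend a (hsub ha) (hI'i a (hA ha)) hap
          · have hbI' : b ∈ I' := Finset.mem_erase.2 ⟨hbi, hbI⟩
            have hab : a ≠ b := fun he => hbA (he ▸ ha)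
            rw [← hcross a (hA ha) b hbI' hab]
            exact hAc a ha b hbI' hbA
        rcases hconn A hsub hcr with h | h
        · exact Or.inl h
        · exfalso
          have : i ∈ A := by rw [h]; exact hi
          exact (hI'i i (hA this)) rfl
    have hdep' : ∃ t'' : ι → ℝ, ∑ a ∈ I', t'' a • w a = 0 ∧ ∃ a ∈ I', t'' a ≠ 0 := by
      refine ⟨t', ?_, p, hpI', (ht'pos p hp).ne'⟩
      have hsum1 : ∀ a ∈ I', t' a • w a = t' a • v a + (if a = p then t' p • v i else 0) := by
        intro a ha
        by_cases hap : a = p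
        · subst hap
          rw [hwp, smul_add, if_pos rfl]
        · rw [hwa a hap, if_neg hap, add_zero]
      have h5 : ∑ a ∈ I', t' a • v a = -(t' i • v i) := by
        have h6 := Finset.sum_erase_add I (fun a => t' a • v a) hi
        rw [ht'sum] at h6
        have := eq_neg_of_add_eq_zero_left h6
        exact this
      calc ∑ a ∈ I', t' a • w a
          = ∑ a ∈ I', (t' a • v a + (if a = p then t' p • v i else 0)) :=
            Finset.sum_congr rfl hsum1
        _ = (∑ a ∈ I', t' a • v a) + ∑ a ∈ I', (if a = p then t' p • v i else 0) :=
            Finset.sum_add_distrib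
        _ = -(t' i • v i) + t' p • v i := by
            rw [h5, Finset.sum_ite_eq' I' p (fun _ => t' p • v i), if_pos hpI']
        _ = 0 := by rw [tip]; abel
    -- evenness of p, j, k in the projected system
    have hep' : ∀ a ∈ I', ∃ z : ℤ, ⟪w a, w p⟫ = z * ⟪w p, w p⟫ := by
      intro a ha
      by_cases hap : a = p
      · exact ⟨1, by subst hap; push_cast; ring⟩
      · obtain ⟨z, hz⟩ := hcrys a (hI'I a ha) p hp
        refine ⟨z, ?_⟩
        rw [hcross a ha p hpI' hap, hwpp]
        rw [hpi2] at hz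
        linarith
    have hej' : ∀ a ∈ I', ∃ z : ℤ, ⟪w a, w j⟫ = z * ⟪w j, w j⟫ := by
      intro a ha
      by_cases haj : a = j
      · exact ⟨1, by subst haj; push_cast; ring⟩
      · obtain ⟨z, hz⟩ := hej a (hI'I a ha)
        refine ⟨z, ?_⟩
        rw [hcross a ha j hjI' haj, hwa j hjp]
        exact hz
    have hek' : ∀ a ∈ I', ∃ z : ℤ, ⟪w a, w k⟫ = z * ⟪w k, w k⟫ := by
      intro a ha
      by_cases hak : a = k
      · exact ⟨1, by subst hak; push_cast; ring⟩
      · obtain ⟨z, hz⟩ := hek a (hI'I a ha)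
        refine ⟨z, ?_⟩
        rw [hcross a ha k hkI' hak, hwa k hkp]
        exact hz
    rcases IH I' w hcard' hnz' hnp' hcrys' hconn' hdep' p hpI' j hjI' k hkI' hep' hej' hek'
      with h | h | h
    · exact hjp h.symm
    · exact hkp h.symm
    · exact hjk h
end XX

/- We model the space `Ê` of affine linear functions on `E = V` as `ℝ × V`:
`(r, α)` is the function `x ↦ r + ⟪α, x⟫`, with gradient `α`. -/

/-- The reflection `s_a(b) = b - (a^∨, b) a` on `Ê`. -/
def affReflection {n : ℕ} (a b : ℝ × EV n) : ℝ × EV n :=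
  b - (2 * ⟪a.2, b.2⟫ / ⟪a.2, a.2⟫) • a

/-- The pairing `(b, a^∨) = 2⟪Db, Da⟫/|Da|²`. -/
def affPairing {n : ℕ} (a b : ℝ × EV n) : ℝ :=
  2 * ⟪a.2, b.2⟫ / ⟪a.2, a.2⟫

/- STATEMENT 8: for an irreducible affine root system `R` with ordered basis
`Δ = (a_0, …, a_n)`, the set `S = {i : (ℤR, a_i^∨) = 2ℤ}` has cardinality ≤ 2. -/
theorem doubling_index_set_card_le_two {n : ℕ}
    (R : Set (ℝ × EV n)) (Δ : Fin (n + 1) → ℝ × EV n)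
    -- affine root system axioms
    (hspan : Submodule.span ℝ R = ⊤)
    (hnz : ∀ a ∈ R, a.2 ≠ 0)
    (hcrys : ∀ a ∈ R, ∀ b ∈ R, ∃ m : ℤ, affPairing a b = (m : ℝ))
    (hrefl : ∀ a ∈ R, ∀ b ∈ R, affReflection a b ∈ R)
    -- properness / local finiteness of the affine Weyl group action
    (hproper : ∀ K : Set ℝ, IsCompact K → ∀ α : EV n, {r ∈ K | (r, α) ∈ R}.Finite)
    -- each gradient is the gradient of at least two affine roots
    (htwo : ∀ a ∈ R, ∃ b ∈ R, b ≠ a ∧ b.2 = a.2)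
    -- irreducibility
    (hirr : ∀ R₁ R₂ : Set (ℝ × EV n), R = R₁ ∪ R₂ →
      (∀ a ∈ R₁, ∀ b ∈ R₂, ⟪a.2, b.2⟫ = 0) → R₁ = ∅ ∨ R₂ = ∅)
    -- `Δ` is an ordered basis of `R`
    (hΔmem : ∀ i, Δ i ∈ R)
    (hΔind : LinearIndependent ℝ Δ)
    (hΔbasis : ∀ a ∈ R,
      (∃ cf : Fin (n + 1) → ℤ, (∀ i, 0 ≤ cf i) ∧ a = ∑ i, cf i • Δ i) ∨
      (∃ cf : Fin (n + 1) → ℤ, (∀ i, cf i ≤ 0) ∧ a = ∑ i, cf i • Δ i)) :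
    Set.ncard {i : Fin (n + 1) |
      {x : ℝ | ∃ lam ∈ AddSubgroup.closure R, affPairing (Δ i) lam = x} =
        {x : ℝ | ∃ m : ℤ, x = 2 * (m : ℝ)}} ≤ 2 := by
  classical
  set S : Set (Fin (n + 1)) := {i : Fin (n + 1) |
      {x : ℝ | ∃ lam ∈ AddSubgroup.closure R, affPairing (Δ i) lam = x} =
        {x : ℝ | ∃ m : ℤ, x = 2 * (m : ℝ)}} with hS
  set α : Fin (n + 1) → EV n := fun a => (Δ a).2 with hα
  have hα0 : ∀ a, α a ≠ 0 := fun a => hnz _ (hΔmem a)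
  have hipα : ∀ a, 0 < ⟪α a, α a⟫ := fun a => ipos _ (hα0 a)
  have hsum : ∀ cf : Fin (n + 1) → ℤ, (∑ i, cf i • Δ i) = ∑ i, ((cf i : ℝ)) • Δ i :=
    fun cf => Finset.sum_congr rfl (fun i _ => (Int.cast_smul_eq_zsmul ℝ (cf i) (Δ i)).symm)
  have huniqR : ∀ cf cg : Fin (n + 1) → ℝ,
      ∑ i, cf i • Δ i = ∑ i, cg i • Δ i → ∀ a, cf a = cg a := by
    intro cf cg h a
    have h0 : ∑ i, (cf i - cg i) • Δ i = 0 := by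
      rw [Finset.sum_congr rfl (fun i _ => sub_smul (cf i) (cg i) (Δ i)),
        Finset.sum_sub_distrib, h, sub_self]
    have := Fintype.linearIndependent_iff.1 hΔind _ h0 a
    linarith [this]
  have hite1 : ∀ (c : Fin (n + 1)) (s : ℝ),
      ∑ i, (if i = c then s else 0) • Δ i = s • Δ c := by
    intro c s
    rw [Finset.sum_congr rfl (fun i _ => show (if i = c then s else 0) • Δ i
      = if i = c then s • Δ i else 0 by split_ifs <;> simp),
      Finset.sum_ite_eq' Finset.univ c (fun i => s • Δ i), if_pos (Finset.mem_univ c)]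
  have hcrysR : ∀ a b : Fin (n + 1), ∃ z : ℤ, 2 * ⟪α a, α b⟫ = z * ⟪α b, α b⟫ := by
    intro a b
    obtain ⟨z, hz⟩ := hcrys (Δ b) (hΔmem b) (Δ a) (hΔmem a)
    unfold affPairing at hz
    rw [div_eq_iff (ne_of_gt (hipα b))] at hz
    refine ⟨z, ?_⟩
    calc 2 * ⟪α a, α b⟫ = 2 * ⟪(Δ b).2, (Δ a).2⟫ := by rw [real_inner_comm]
      _ = z * ⟪α b, α b⟫ := hz
  -- nonpositivity of inner products of distinct simple roots
  have hnpα : ∀ a b : Fin (n + 1), a ≠ b → ⟪α a, α b⟫ ≤ 0 := by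
    intro a b hab
    by_contra hpos
    push_neg at hpos
    obtain ⟨z, hz⟩ := hcrys (Δ b) (hΔmem b) (Δ a) (hΔmem a)
    unfold affPairing at hz
    have hzpos : 0 < (z : ℝ) := by
      rw [← hz]
      apply div_pos _ (hipα b)
      have : ⟪(Δ b).2, (Δ a).2⟫ = ⟪α a, α b⟫ := real_inner_comm _ _
      rw [this]; linarith
    have hrm : affReflection (Δ b) (Δ a) ∈ R := hrefl _ (hΔmem b) _ (hΔmem a)
    have hform : affReflection (Δ b) (Δ a) = Δ a - (z : ℝ) • Δ b := by
      unfold affReflection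
      rw [hz]
    have hgsum : Δ a - (z : ℝ) • Δ b
        = ∑ i, ((if i = a then (1 : ℝ) else 0) - (if i = b then (z : ℝ) else 0)) • Δ i := by
      rw [Finset.sum_congr rfl (fun i _ => sub_smul _ _ (Δ i)), Finset.sum_sub_distrib,
        hite1 a 1, hite1 b (z : ℝ), one_smul]
    rcases hΔbasis _ hrm with ⟨cf, hcf, heq⟩ | ⟨cf, hcf, heq⟩
    · have heq' : ∑ i, ((cf i : ℝ)) • Δ i
          = ∑ i, ((if i = a then (1 : ℝ) else 0) - (if i = b then (z : ℝ) else 0)) • Δ i := by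
        rw [← hsum cf, ← heq, hform, hgsum]
      have hval := huniqR _ _ heq' b
      rw [if_neg (Ne.symm hab), if_pos rfl] at hval
      have hge : (0 : ℝ) ≤ (cf b : ℝ) := by exact_mod_cast hcf b
      rw [hval] at hge
      linarith
    · have heq' : ∑ i, ((cf i : ℝ)) • Δ i
          = ∑ i, ((if i = a then (1 : ℝ) else 0) - (if i = b then (z : ℝ) else 0)) • Δ i := by
        rw [← hsum cf, ← heq, hform, hgsum]
      have hval := huniqR _ _ heq' a
      rw [if_pos rfl, if_neg hab] at hval
      have hle : (cf a : ℝ) ≤ 0 := by exact_mod_cast hcf a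
      rw [hval] at hle
      linarith
  -- connectivity, via irreducibility of R
  have hconnα : ∀ A ⊆ (Finset.univ : Finset (Fin (n + 1))),
      (∀ a ∈ A, ∀ b ∈ (Finset.univ : Finset (Fin (n + 1))), b ∉ A → ⟪α a, α b⟫ = 0) →
      A = ∅ ∨ A = Finset.univ := by
    intro A _ hAorth
    by_contra hcon
    push_neg at hcon
    obtain ⟨hAne, hAnu⟩ := hcon
    obtain ⟨a₀, ha₀⟩ := hAne
    obtain ⟨b₀, hb₀⟩ : ∃ b, b ∉ A := by
      by_contra h
      push_neg at h
      exact hAnu (Finset.eq_univ_iff_forall.2 h)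
    set U : Submodule ℝ (EV n) := Submodule.span ℝ (α '' ↑A) with hU
    have hUmem : ∀ a ∈ A, α a ∈ U :=
      fun a ha => Submodule.subset_span ⟨a, by simpa using ha, rfl⟩
    have hneg : ∀ r ∈ R, -r ∈ R := by
      intro r hr
      have h2 := hrefl r hr r hr
      have h3 : affReflection r r = -r := by
        unfold affReflection
        rw [mul_div_assoc, div_self (ne_of_gt (ipos _ (hnz r hr))), mul_one]
        module
      rwa [h3] at h2
    have claim : ∀ (N : ℕ) (r : ℝ × EV n), r ∈ R → ∀ cf : Fin (n + 1) → ℤ,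
        (∀ i, 0 ≤ cf i) → r = ∑ i, cf i • Δ i → (∑ i, (cf i).toNat) ≤ N →
        (r.2 ∈ U ∨ ∀ a ∈ A, ⟪r.2, α a⟫ = 0) := by
      intro N
      induction N with
      | zero =>
        intro r _ cf hcf hre hht
        have hz : ∀ i, cf i = 0 := by
          intro i
          have h1 : (cf i).toNat = 0 := Nat.eq_zero_of_le_zero (le_trans
            (Finset.single_le_sum (f := fun i => (cf i).toNat)
              (fun _ _ => Nat.zero_le _) (Finset.mem_univ i)) hht)
          have := hcf i
          omega
        have hr0 : r = 0 := by
          rw [hre]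
          exact Finset.sum_eq_zero (fun i _ => by rw [hz i, zero_smul])
        left
        rw [hr0]
        exact Submodule.zero_mem U
      | succ N IHN =>
        intro r hr cf hcf hre hht
        have hsnd : r.2 = ∑ i, (cf i : ℝ) • α i := by
          rw [hre, hsum cf, Prod.snd_sum]
          exact Finset.sum_congr rfl (fun i _ => rfl)
        set u : EV n := ∑ a ∈ A, (cf a : ℝ) • α a with hu
        set wv : EV n := ∑ b ∈ Aᶜ, (cf b : ℝ) • α b with hwv
        have hsplit : r.2 = u + wv := by
          rw [hsnd, hu, hwv, Finset.sum_add_sum_compl A (fun i => (cf i : ℝ) • α i)]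
        have hwU : ∀ a ∈ A, ⟪wv, α a⟫ = 0 := by
          intro a ha
          rw [hwv, sum_inner]
          apply Finset.sum_eq_zero
          intro b hb
          rw [real_inner_smul_left, real_inner_comm,
            hAorth a ha b (Finset.mem_univ b) (Finset.mem_compl.1 hb), mul_zero]
        by_cases hu0 : u = 0
        · right
          intro a ha
          rw [hsplit, hu0, zero_add]
          exact hwU a ha
        · have hru : ⟪r.2, u⟫ = ⟪u, u⟫ := by
            rw [hsplit, inner_add_left]
            have : ⟪wv, u⟫ = 0 := by
              rw [hu, inner_sum]
              apply Finset.sum_eq_zero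
              intro a ha
              rw [real_inner_smul_right, hwU a ha, mul_zero]
            rw [this, add_zero]
          have hupos : 0 < ⟪u, u⟫ := ipos u hu0
          have hex : ∃ p ∈ A, 0 < (cf p : ℝ) * ⟪r.2, α p⟫ := by
            by_contra hcon3
            push_neg at hcon3
            have hexp : ⟪r.2, u⟫ = ∑ a ∈ A, (cf a : ℝ) * ⟪r.2, α a⟫ := by
              rw [hu, inner_sum]
              exact Finset.sum_congr rfl (fun a _ => by rw [real_inner_smul_right])
            have hle := Finset.sum_nonpos hcon3
            rw [← hexp] at hle
            rw [hru] at hle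
            linarith
          obtain ⟨p, hpA, hppos⟩ := hex
          have hrp : 0 < ⟪r.2, α p⟫ := by
            rcases mul_pos_iff.1 hppos with ⟨_, h⟩ | ⟨h, _⟩
            · exact h
            · exfalso
              have : (0 : ℝ) ≤ (cf p : ℝ) := by exact_mod_cast hcf p
              linarith
          obtain ⟨z, hz⟩ := hcrys (Δ p) (hΔmem p) r hr
          unfold affPairing at hz
          have hzmul := hz
          rw [div_eq_iff (ne_of_gt (hipα p))] at hzmul
          have hcomm : ⟪(Δ p).2, r.2⟫ = ⟪r.2, α p⟫ := real_inner_comm _ _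
          have hzpos : (0 : ℝ) < z := by nlinarith [hipα p]
          have hz1 : 1 ≤ z := by exact_mod_cast (by exact_mod_cast hzpos : (0 : ℤ) < z)
          have hr' : affReflection (Δ p) r ∈ R := hrefl _ (hΔmem p) r hr
          have hform : affReflection (Δ p) r = r - (z : ℝ) • Δ p := by
            unfold affReflection
            rw [hz]
          set cf' : Fin (n + 1) → ℤ := fun i => cf i - (if i = p then z else 0) with hcf'
          have hcf'eval : ∀ i, cf' i = cf i - (if i = p then z else 0) := fun i => by rw [hcf']
          have huniqZ : ∀ ca cb : Fin (n + 1) → ℤ,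
              ∑ i, ca i • Δ i = ∑ i, cb i • Δ i → ∀ a, ca a = cb a := by
            intro ca cb h a
            have h' : ∑ i, ((ca i : ℝ)) • Δ i = ∑ i, ((cb i : ℝ)) • Δ i := by
              rw [← hsum ca, ← hsum cb]; exact h
            exact_mod_cast huniqR _ _ h' a
          have hre' : affReflection (Δ p) r = ∑ i, cf' i • Δ i := by
            rw [hform, hre, hsum cf, hsum cf']
            have hpc : ∀ i : Fin (n + 1),
                ((cf' i : ℝ)) • Δ i = ((cf i : ℝ)) • Δ i - (if i = p then (z : ℝ) else 0) • Δ i := by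
              intro i
              rw [hcf'eval i]
              split_ifs with h
              · push_cast
                rw [sub_smul]
              · simp
            calc (∑ i, ((cf i : ℝ)) • Δ i) - (z : ℝ) • Δ p
                = (∑ i, ((cf i : ℝ)) • Δ i) - ∑ i, (if i = p then (z : ℝ) else 0) • Δ i := by
                  rw [hite1 p (z : ℝ)]
              _ = ∑ i, (((cf i : ℝ)) • Δ i - (if i = p then (z : ℝ) else 0) • Δ i) :=
                  by rw [Finset.sum_sub_distrib]
              _ = ∑ i, ((cf' i : ℝ)) • Δ i := Finset.sum_congr rfl (fun i _ => (hpc i).symm)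
          rcases hΔbasis _ hr' with ⟨cg, hcg, heq⟩ | ⟨cg, hcg, heq⟩
          · -- nonneg case: recurse
            have hcgeq : ∀ i, cg i = cf' i := huniqZ cg cf' (by rw [← heq, ← hre'])
            have hcf'nn : ∀ i, 0 ≤ cf' i := fun i => (hcgeq i) ▸ hcg i
            have hht' : ∑ i, (cf' i).toNat ≤ N := by
              have hlt : ∑ i, (cf' i).toNat < ∑ i, (cf i).toNat := by
                apply Finset.sum_lt_sum
                · intro i _
                  have h1 := hcf i
                  have h2 := hcf'nn i
                  rw [hcf'eval i] at h2 ⊢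
                  split_ifs with h
                  · omega
                  · omega
                · refine ⟨p, Finset.mem_univ p, ?_⟩
                  have hp1 := hcf'nn p
                  rw [hcf'eval p] at hp1 ⊢
                  rw [if_pos rfl] at hp1 ⊢
                  omega
              omega
            rcases IHN (affReflection (Δ p) r) hr' cf' hcf'nn hre' hht' with hL | hR
            · left
              have hsnd' : (affReflection (Δ p) r).2 = r.2 - (z : ℝ) • α p := by
                rw [hform]
                rfl
              rw [hsnd'] at hL
              have h6 : r.2 = (r.2 - (z : ℝ) • α p) + (z : ℝ) • α p := by abel
              rw [h6]
              exact Submodule.add_mem U hL (Submodule.smul_mem U _ (hUmem p hpA))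
            · exfalso
              have h4 := hR p hpA
              have hsnd' : (affReflection (Δ p) r).2 = r.2 - (z : ℝ) • α p := by
                rw [hform]
                rfl
              rw [hsnd', inner_sub_left, real_inner_smul_left] at h4
              rw [hcomm] at hzmul
              nlinarith [hipα p]
          · -- nonpos case: wv must vanish
            have hcgeq : ∀ i, cg i = cf' i := huniqZ cg cf' (by rw [← heq, ← hre'])
            have hzero : ∀ i, i ≠ p → cf i = 0 := by
              intro i hip
              have h1 := hcg i
              rw [hcgeq i, hcf'eval i, if_neg hip] at h1
              have := hcf i
              omega
            have hwv0 : wv = 0 := by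
              rw [hwv]
              apply Finset.sum_eq_zero
              intro b hb
              have hbp : b ≠ p := by
                intro he
                rw [he] at hb
                exact (Finset.mem_compl.1 hb) hpA
              rw [hzero b hbp]
              simp
            left
            rw [hsplit, hwv0, add_zero, hu]
            exact Submodule.sum_mem U
              (fun a ha => Submodule.smul_mem U _ (hUmem a ha))
    have claim2 : ∀ r ∈ R, r.2 ∈ U ∨ ∀ a ∈ A, ⟪r.2, α a⟫ = 0 := by
      intro r hr
      rcases hΔbasis r hr with ⟨cf, hcf, hre⟩ | ⟨cf, hcf, hre⟩
      · exact claim (∑ i, (cf i).toNat) r hr cf hcf hre le_rfl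
      · have hnegr := hneg r hr
        have hre' : -r = ∑ i, (fun i => -cf i) i • Δ i := by
          rw [hre, ← Finset.sum_neg_distrib]
          exact Finset.sum_congr rfl (fun i _ => (neg_zsmul (Δ i) (cf i)).symm)
        rcases claim (∑ i, ((-cf i)).toNat) (-r) hnegr (fun i => -cf i)
            (fun i => by show (0:ℤ) ≤ -cf i; have := hcf i; omega) hre' le_rfl with h | h
        · left
          have : -r.2 ∈ U := h
          simpa using Submodule.neg_mem U this
        · right
          intro a ha
          have h5 := h a ha
          have : ((-r).2 : EV n) = -r.2 := rfl
          rw [this, inner_neg_left] at h5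
          linarith
    set R₁ : Set (ℝ × EV n) := {r | r ∈ R ∧ r.2 ∈ U} with hR₁
    set R₂ : Set (ℝ × EV n) := {r | r ∈ R ∧ ∀ a ∈ A, ⟪r.2, α a⟫ = 0} with hR₂
    have hRsplit : R = R₁ ∪ R₂ := by
      ext r
      constructor
      · intro hr
        rcases claim2 r hr with h | h
        · exact Or.inl ⟨hr, h⟩
        · exact Or.inr ⟨hr, h⟩
      · rintro (⟨hr, _⟩ | ⟨hr, _⟩) <;> exact hr
    have hRorth : ∀ x ∈ R₁, ∀ y ∈ R₂, ⟪x.2, y.2⟫ = 0 := by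
      rintro x ⟨_, hxU⟩ y ⟨_, hyO⟩
      refine Submodule.span_induction (p := fun m _ => ⟪m, y.2⟫ = 0) ?_ ?_ ?_ ?_ hxU
      · rintro x' ⟨a, haA, rfl⟩
        rw [real_inner_comm]
        exact hyO a (by simpa using haA)
      · exact inner_zero_left _
      · intro x₁ x₂ _ _ h₁ h₂
        rw [inner_add_left, h₁, h₂, add_zero]
      · intro c x' _ h'
        rw [real_inner_smul_left, h', mul_zero]
    rcases hirr R₁ R₂ hRsplit hRorth with h | h
    · have : Δ a₀ ∈ R₁ := ⟨hΔmem a₀, hUmem a₀ ha₀⟩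
      rw [h] at this
      exact this
    · have : Δ b₀ ∈ R₂ := ⟨hΔmem b₀, fun a ha => by
        rw [real_inner_comm]
        exact hAorth a ha b₀ (Finset.mem_univ b₀) hb₀⟩
      rw [h] at this
      exact this
  -- linear dependence of the gradients
  have hdepα : ∃ t : Fin (n + 1) → ℝ,
      ∑ a ∈ Finset.univ, t a • α a = 0 ∧ ∃ a ∈ (Finset.univ : Finset (Fin (n + 1))), t a ≠ 0 := by
    have hnli : ¬ LinearIndependent ℝ α := by
      intro h
      have h2 := h.fintype_card_le_finrank
      rw [finrank_euclideanSpace_fin] at h2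
      simp at h2
    obtain ⟨g, hg, i0, hi0⟩ := Fintype.not_linearIndependent_iff.1 hnli
    exact ⟨g, hg, i0, Finset.mem_univ i0, hi0⟩
  -- membership in S gives evenness
  have heven : ∀ i ∈ S, ∀ a : Fin (n + 1), ∃ z : ℤ, ⟪α a, α i⟫ = z * ⟪α i, α i⟫ := by
    intro i hiS a
    have hmem : affPairing (Δ i) (Δ a) ∈
        {x : ℝ | ∃ lam ∈ AddSubgroup.closure R, affPairing (Δ i) lam = x} :=
      ⟨Δ a, AddSubgroup.subset_closure (hΔmem a), rfl⟩
    rw [hiS] at hmem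
    obtain ⟨z, hz⟩ := hmem
    refine ⟨z, ?_⟩
    unfold affPairing at hz
    rw [div_eq_iff (ne_of_gt (hipα i))] at hz
    have hc : ⟪(Δ i).2, (Δ a).2⟫ = ⟪α a, α i⟫ := real_inner_comm _ _
    rw [hc] at hz
    linarith
  -- conclusion through lemB
  by_contra hcount
  push_neg at hcount
  obtain ⟨T, hTsub, hT3⟩ := Set.exists_subset_card_eq (s := S) (n := 3) (by omega)
  obtain ⟨x, y, z, hxy, hxz, hyz, hTdef⟩ := Set.ncard_eq_three.1 hT3
  have hxS : x ∈ S := hTsub (hTdef ▸ (by simp : x ∈ ({x, y, z} : Set (Fin (n + 1)))))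
  have hyS : y ∈ S := hTsub (hTdef ▸ (by simp : y ∈ ({x, y, z} : Set (Fin (n + 1)))))
  have hzS : z ∈ S := hTsub (hTdef ▸ (by simp : z ∈ ({x, y, z} : Set (Fin (n + 1)))))
  have hfin := lemB (n + 1) (Finset.univ : Finset (Fin (n + 1))) α (by simp)
    (fun a _ => hα0 a)
    (fun a _ b _ hab => hnpα a b hab)
    (fun a _ b _ => hcrysR a b)
    hconnα
    hdepα
    x (Finset.mem_univ x) y (Finset.mem_univ y) z (Finset.mem_univ z)
    (fun a _ => heven x hxS a)
    (fun a _ => heven y hyS a)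
    (fun a _ => heven z hzS a)
  rcases hfin with h | h | h
  · exact hxy h
  · exact hxz h
  · exact hyz h
end
end

section
/- The monic symmetric Macdonald polynomial of degree (λ_1, λ_2) for GL_2 (with λ_1 ≥ λ_2), given by P^+_λ(t_1,t_2) = t_1^{λ_1} t_2^{λ_2} · ₂φ₁(κ², q^{λ_2-λ_1}; q^{1+λ_2-λ_1}/κ²; q, q t_2/(κ² t_1)), is a symmetric Laurent polynomial in (t_1, t_2), i.e. invariant under interchanging t_1 and t_2, and its expansion in monomial symmetric functions has leading term m_{(λ_1,λ_2)} with coefficient 1. -/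
noncomputable section

/-- Finite `q`-shifted factorial `(x; q)_k = ∏_{j=0}^{k-1} (1 - q^j x)`. -/
def qPoch (q x : ℂ) (k : ℕ) : ℂ := ∏ j ∈ Finset.range k, (1 - q ^ j * x)

/-- The terminating basic hypergeometric series
`₂φ₁(a, q^{-m}; c; q, z) = ∑_{k=0}^{m} ((a;q)_k (q^{-m};q)_k / ((c;q)_k (q;q)_k)) z^k`. -/
def phi21 (q a b c z : ℂ) (m : ℕ) : ℂ :=
  ∑ k ∈ Finset.range (m + 1),
    (qPoch q a k * qPoch q b k / (qPoch q c k * qPoch q q k)) * z ^ k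

/-- The monic symmetric `GL₂` Macdonald polynomial of degree `(λ₁, λ₂)`, `λ₁ ≥ λ₂`:
`P⁺(t₁,t₂) = t₁^{λ₁} t₂^{λ₂} ₂φ₁(κ², q^{λ₂-λ₁}; q^{1+λ₂-λ₁}/κ²; q, q t₂/(κ² t₁))`. -/
def glTwoMacdonald (q κ : ℂ) (lam : ℤ × ℤ) (t₁ t₂ : ℂ) : ℂ :=
  t₁ ^ lam.1 * t₂ ^ lam.2 *
    phi21 q (κ ^ 2) (q ^ (lam.2 - lam.1)) (q ^ (1 + lam.2 - lam.1) / κ ^ 2)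
      (q * t₂ / (κ ^ 2 * t₁)) (lam.1 - lam.2).toNat

/-- The orbit sum (monomial symmetric Laurent polynomial) `m_{(a,b)}(t₁,t₂)`. -/
def orbitSum (a b : ℤ) (t₁ t₂ : ℂ) : ℂ :=
  if a = b then t₁ ^ a * t₂ ^ b else t₁ ^ a * t₂ ^ b + t₁ ^ b * t₂ ^ a

namespace GL2Aux

variable {q κ : ℝ} (hq : 0 < q ∧ q < 1) (hκ : 0 < κ ∧ κ < 1)

include hq in
lemma fac_q (n : ℕ) : (1 : ℂ) - (q : ℂ) ^ n * q ≠ 0 := by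
  have h1 : q ^ n * q < 1 := by
    have := pow_le_one₀ hq.1.le hq.2.le (n := n)
    nlinarith [pow_pos hq.1 n]
  have h : ((1 - q ^ n * q : ℝ) : ℂ) ≠ 0 :=
    Complex.ofReal_ne_zero.mpr (ne_of_gt (by linarith))
  push_cast at h
  convert h using 1

include hq hκ in
lemma fac_kappa (n : ℕ) : (1 : ℂ) - (q : ℂ) ^ n * (κ : ℂ) ^ 2 ≠ 0 := by
  have h1 : q ^ n * κ ^ 2 < 1 := by
    have h2 := pow_le_one₀ hq.1.le hq.2.le (n := n)
    nlinarith [pow_pos hq.1 n, sq_nonneg κ]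
  have h : ((1 - q ^ n * κ ^ 2 : ℝ) : ℂ) ≠ 0 :=
    Complex.ofReal_ne_zero.mpr (ne_of_gt (by linarith))
  push_cast at h
  convert h using 1

include hq hκ in
lemma fac_c {j : ℕ} {m : ℕ} (hj : j < m) :
    (1 : ℂ) - (q : ℂ) ^ j * ((q : ℂ) ^ ((1 : ℤ) - (m : ℤ)) / (κ : ℂ) ^ 2) ≠ 0 := by
  have hq0 : q ≠ 0 := ne_of_gt hq.1
  have hcast : (q : ℂ) ^ j * ((q : ℂ) ^ ((1 : ℤ) - (m : ℤ)) / (κ : ℂ) ^ 2)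
      = ((q ^ j * (q ^ ((1 : ℤ) - (m : ℤ)) / κ ^ 2) : ℝ) : ℂ) := by
    push_cast [Complex.ofReal_zpow]
    ring
  rw [hcast]
  have hκ2 : κ ^ 2 < 1 := by nlinarith
  have hκ2pos : 0 < κ ^ 2 := pow_pos hκ.1 2
  have hge : (1 : ℝ) < q ^ j * (q ^ ((1 : ℤ) - (m : ℤ)) / κ ^ 2) := by
    have he : (q : ℝ) ^ j * q ^ ((1 : ℤ) - (m : ℤ)) = q ^ ((j : ℤ) + 1 - m) := by
      rw [← zpow_natCast q j, ← zpow_add₀ hq0]; ring_nf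
    have h1 : (1 : ℝ) ≤ q ^ ((j : ℤ) + 1 - m) := by
      apply one_le_zpow_of_nonpos₀ hq.1 hq.2.le
      omega
    rw [← mul_div_assoc, he, lt_div_iff₀ hκ2pos]
    linarith
  intro h
  have : (1 : ℝ) - q ^ j * (q ^ ((1 : ℤ) - (m : ℤ)) / κ ^ 2) = 0 := by exact_mod_cast h
  linarith

include hq in
lemma qPoch_q_ne (k : ℕ) : qPoch (q : ℂ) (q : ℂ) k ≠ 0 :=
  Finset.prod_ne_zero_iff.mpr fun j _ => fac_q hq j

include hq hκ in
lemma qPoch_kappa_ne (k : ℕ) : qPoch (q : ℂ) ((κ : ℂ) ^ 2) k ≠ 0 :=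
  Finset.prod_ne_zero_iff.mpr fun j _ => fac_kappa hq hκ j

include hq hκ in
lemma qPoch_c_ne {k m : ℕ} (hk : k ≤ m) :
    qPoch (q : ℂ) ((q : ℂ) ^ ((1 : ℤ) - (m : ℤ)) / (κ : ℂ) ^ 2) k ≠ 0 :=
  Finset.prod_ne_zero_iff.mpr fun j hj =>
    fac_c hq hκ (lt_of_lt_of_le (Finset.mem_range.mp hj) hk)

include hq hκ in
lemma key {m : ℕ} : ∀ k, k ≤ m →
    qPoch (q:ℂ) ((q:ℂ)^(-(m:ℤ))) k * ((q:ℂ)/(κ:ℂ)^2)^k *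
      (qPoch (q:ℂ) ((κ:ℂ)^2) m * qPoch (q:ℂ) (q:ℂ) (m-k))
    = qPoch (q:ℂ) (q:ℂ) m * qPoch (q:ℂ) ((κ:ℂ)^2) (m-k) *
      qPoch (q:ℂ) ((q:ℂ)^((1:ℤ)-(m:ℤ))/(κ:ℂ)^2) k := by
  intro k
  induction k with
  | zero =>
    intro _
    simp only [qPoch, Finset.prod_range_zero, Nat.sub_zero, one_mul, pow_zero, mul_one]
    ring
  | succ k IH =>
    intro hk1
    have hk : k ≤ m := by omega
    have hq0 : (q:ℂ) ≠ 0 := by exact_mod_cast ne_of_gt hq.1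
    have hκ0 : (κ:ℂ) ≠ 0 := by exact_mod_cast ne_of_gt hκ.1
    have hmk : m - k = (m - (k+1)) + 1 := by omega
    have hcast : ((m - (k+1) : ℕ) : ℤ) = (m : ℤ) - k - 1 := by omega
    have hrel : (q:ℂ) ^ ((k:ℤ) - m) * ((q:ℂ) ^ (m - (k+1)) * (q:ℂ)) = 1 := by
      rw [← zpow_natCast (q:ℂ) (m - (k+1)), hcast, ← zpow_add_one₀ hq0,
        ← zpow_add₀ hq0]
      rw [show (k:ℤ) - m + ((m:ℤ) - k - 1 + 1) = 0 by ring, zpow_zero]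
    have hv1 : (q:ℂ)^k * (q:ℂ)^(-(m:ℤ)) = (q:ℂ) ^ ((k:ℤ) - m) := by
      rw [← zpow_natCast (q:ℂ) k, ← zpow_add₀ hq0, Int.sub_eq_add_neg]
    have hv2 : (q:ℂ)^k * ((q:ℂ)^((1:ℤ)-(m:ℤ))/(κ:ℂ)^2)
        = (q:ℂ) * (q:ℂ) ^ ((k:ℤ) - m) / (κ:ℂ)^2 := by
      rw [← zpow_natCast (q:ℂ) k, div_eq_mul_inv, div_eq_mul_inv, ← mul_assoc,
        ← zpow_add₀ hq0, show (k:ℤ) + (1 - m) = 1 + ((k:ℤ) - m) by ring,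
        zpow_add₀ hq0, zpow_one]
    have hscal : (1 - (q:ℂ) ^ ((k:ℤ) - m)) * ((q:ℂ)/(κ:ℂ)^2) *
          (1 - (q:ℂ) ^ (m - (k+1)) * (κ:ℂ)^2)
        = (1 - (q:ℂ) * (q:ℂ) ^ ((k:ℤ) - m) / (κ:ℂ)^2) *
          (1 - (q:ℂ) ^ (m - (k+1)) * (q:ℂ)) := by
      field_simp
      linear_combination ((κ:ℂ)^2 - q) * hrel
    have hF : (1 - (q:ℂ) ^ (m - (k+1)) * (q:ℂ)) *
        (1 - (q:ℂ) ^ (m - (k+1)) * (κ:ℂ)^2) ≠ 0 :=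
      mul_ne_zero (fac_q hq (m - (k+1))) (fac_kappa hq hκ (m - (k+1)))
    have IH' := IH hk
    rw [hmk] at IH'
    simp only [qPoch, Finset.prod_range_succ] at IH' ⊢
    rw [hv1, hv2]
    apply mul_right_cancel₀ hF
    linear_combination ((1 - (q:ℂ) ^ ((k:ℤ) - m)) * ((q:ℂ)/(κ:ℂ)^2) *
        (1 - (q:ℂ) ^ (m - (k+1)) * (κ:ℂ)^2)) * IH'
      + ((∏ j ∈ Finset.range m, (1 - (q:ℂ)^j * q)) *
         (∏ j ∈ Finset.range (m - (k+1)), (1 - (q:ℂ)^j * (κ:ℂ)^2)) *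
         (∏ j ∈ Finset.range k, (1 - (q:ℂ)^j * ((q:ℂ)^((1:ℤ)-(m:ℤ))/(κ:ℂ)^2))) *
         (1 - (q:ℂ) ^ (m - (k+1)) * (κ:ℂ)^2)) * hscal

def coeffA (q κ : ℂ) (m k : ℕ) : ℂ :=
  qPoch q (κ^2) k * qPoch q (q^(-(m:ℤ))) k /
    (qPoch q (q^((1:ℤ)-(m:ℤ))/κ^2) k * qPoch q q k) * (q/κ^2)^k

lemma coeffA_zero (q κ : ℂ) (m : ℕ) : coeffA q κ m 0 = 1 := by
  simp [coeffA, qPoch]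

include hq hκ in
lemma coeffA_eq {m k : ℕ} (hk : k ≤ m) :
    coeffA (q:ℂ) (κ:ℂ) m k *
      (qPoch (q:ℂ) ((κ:ℂ)^2) m * qPoch (q:ℂ) (q:ℂ) k * qPoch (q:ℂ) (q:ℂ) (m-k))
    = qPoch (q:ℂ) (q:ℂ) m * qPoch (q:ℂ) ((κ:ℂ)^2) k * qPoch (q:ℂ) ((κ:ℂ)^2) (m-k) := by
  have hD : qPoch (q:ℂ) ((q:ℂ)^((1:ℤ)-(m:ℤ))/(κ:ℂ)^2) k * qPoch (q:ℂ) (q:ℂ) k ≠ 0 :=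
    mul_ne_zero (qPoch_c_ne hq hκ hk) (qPoch_q_ne hq k)
  rw [coeffA, div_mul_eq_mul_div, div_mul_eq_mul_div, div_eq_iff hD]
  linear_combination (qPoch (q:ℂ) ((κ:ℂ)^2) k * qPoch (q:ℂ) (q:ℂ) k) * key hq hκ k hk

include hq hκ in
lemma coeffA_palindrome {m k : ℕ} (hk : k ≤ m) :
    coeffA (q:ℂ) (κ:ℂ) m (m-k) = coeffA (q:ℂ) (κ:ℂ) m k := by
  have h1 := coeffA_eq hq hκ hk
  have h2 := coeffA_eq hq hκ (Nat.sub_le m k)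
  rw [show m - (m-k) = k by omega] at h2
  have hX : qPoch (q:ℂ) ((κ:ℂ)^2) m * qPoch (q:ℂ) (q:ℂ) k * qPoch (q:ℂ) (q:ℂ) (m-k) ≠ 0 :=
    mul_ne_zero (mul_ne_zero (qPoch_kappa_ne hq hκ m) (qPoch_q_ne hq k)) (qPoch_q_ne hq (m-k))
  apply mul_right_cancel₀ hX
  linear_combination h2 - h1 + h1 - h1 + (h2 - h2)

lemma expand (q κ : ℂ) (hκ0 : κ ≠ 0) (m : ℕ) (lam : ℤ × ℤ)
    (h1 : lam.1 - lam.2 = (m : ℤ)) (t₁ t₂ : ℂ) (ht₁ : t₁ ≠ 0) (ht₂ : t₂ ≠ 0) :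
    glTwoMacdonald q κ lam t₁ t₂ =
      ∑ k ∈ Finset.range (m + 1),
        coeffA q κ m k * (t₁ ^ (lam.1 - (k : ℤ)) * t₂ ^ (lam.2 + (k : ℤ))) := by
  have h2 : lam.2 - lam.1 = -(m : ℤ) := by omega
  have h3 : 1 + lam.2 - lam.1 = (1 : ℤ) - (m : ℤ) := by omega
  have h4 : (lam.1 - lam.2).toNat = m := by omega
  rw [glTwoMacdonald, phi21, h2, h3, h4, Finset.mul_sum]
  apply Finset.sum_congr rfl
  intro k _
  rw [coeffA]
  have e1 : t₁ ^ (lam.1 - (k : ℤ)) = t₁ ^ lam.1 / t₁ ^ (k : ℕ) := by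
    rw [zpow_sub₀ ht₁, zpow_natCast]
  have e2 : t₂ ^ (lam.2 + (k : ℤ)) = t₂ ^ lam.2 * t₂ ^ (k : ℕ) := by
    rw [zpow_add₀ ht₂, zpow_natCast]
  rw [e1, e2]
  set R : ℂ := qPoch q (κ^2) k * qPoch q (q^(-(m:ℤ))) k /
    (qPoch q (q^((1:ℤ)-(m:ℤ))/κ^2) k * qPoch q q k) with hR
  field_simp
  have ht : t₁ ^ k * t₁⁻¹ ^ k = 1 := by rw [← mul_pow, mul_inv_cancel₀ ht₁, one_pow]
  linear_combination (R * q ^ k * t₂ ^ k * κ⁻¹ ^ (k * 2)) * ht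

end GL2Aux

open GL2Aux

theorem glTwo_macdonald_symmetric_and_triangular
    (q κ : ℝ) (hq : 0 < q ∧ q < 1) (hκ : 0 < κ ∧ κ < 1)
    (lam : ℤ × ℤ) (hlam : lam.2 ≤ lam.1) :
    (∀ t₁ t₂ : ℂ, t₁ ≠ 0 → t₂ ≠ 0 →
        glTwoMacdonald (q : ℂ) (κ : ℂ) lam t₁ t₂ =
          glTwoMacdonald (q : ℂ) (κ : ℂ) lam t₂ t₁) ∧
    ∃ d : ℕ → ℂ, d 0 = 1 ∧
      ∀ t₁ t₂ : ℂ, t₁ ≠ 0 → t₂ ≠ 0 →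
        glTwoMacdonald (q : ℂ) (κ : ℂ) lam t₁ t₂ =
          ∑ k ∈ Finset.range ((lam.1 - lam.2).toNat / 2 + 1),
            d k * orbitSum (lam.1 - k) (lam.2 + k) t₁ t₂ := by
  have hκ0 : (κ:ℂ) ≠ 0 := by exact_mod_cast ne_of_gt hκ.1
  set m : ℕ := (lam.1 - lam.2).toNat with hm
  have h1 : lam.1 - lam.2 = (m : ℤ) := by
    rw [hm]; exact (Int.toNat_of_nonneg (by omega)).symm
  -- per-term reflection identity
  have hterm : ∀ (t₁ t₂ : ℂ), t₁ ≠ 0 → t₂ ≠ 0 → ∀ j, j ≤ m →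
      coeffA (q:ℂ) (κ:ℂ) m (m-j) *
        (t₁ ^ (lam.1 - ((m-j : ℕ) : ℤ)) * t₂ ^ (lam.2 + ((m-j : ℕ) : ℤ)))
      = coeffA (q:ℂ) (κ:ℂ) m j * (t₂ ^ (lam.1 - (j : ℤ)) * t₁ ^ (lam.2 + (j : ℤ))) := by
    intro t₁ t₂ ht₁ ht₂ j hj
    have hc : ((m - j : ℕ) : ℤ) = (m : ℤ) - j := by omega
    rw [coeffA_palindrome hq hκ hj, hc,
      show lam.1 - ((m:ℤ) - j) = lam.2 + (j:ℤ) by omega,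
      show lam.2 + ((m:ℤ) - j) = lam.1 - (j:ℤ) by omega]
    ring
  constructor
  · intro t₁ t₂ ht₁ ht₂
    rw [expand (q:ℂ) (κ:ℂ) hκ0 m lam h1 t₁ t₂ ht₁ ht₂,
      expand (q:ℂ) (κ:ℂ) hκ0 m lam h1 t₂ t₁ ht₂ ht₁,
      ← Finset.sum_range_reflect]
    apply Finset.sum_congr rfl
    intro j hj
    have hj' : j ≤ m := by simpa using Nat.lt_succ_iff.mp (Finset.mem_range.mp hj)
    rw [show m + 1 - 1 - j = m - j by omega]
    exact hterm t₁ t₂ ht₁ ht₂ j hj'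
  · refine ⟨coeffA (q:ℂ) (κ:ℂ) m, coeffA_zero _ _ _, ?_⟩
    intro t₁ t₂ ht₁ ht₂
    rw [expand (q:ℂ) (κ:ℂ) hκ0 m lam h1 t₁ t₂ ht₁ ht₂]
    rcases Nat.even_or_odd m with ⟨h, hmh⟩ | ⟨h, hmh⟩
    · -- m = h + h
      have hdiv : m / 2 = h := by omega
      rw [hdiv, show m + 1 = (h+1) + h by omega, Finset.sum_range_add,
        ← Finset.sum_range_reflect (fun x => coeffA (q:ℂ) (κ:ℂ) m ((h+1) + x) *
          (t₁ ^ (lam.1 - (((h+1)+x : ℕ) : ℤ)) * t₂ ^ (lam.2 + (((h+1)+x : ℕ) : ℤ)))) h,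
        Finset.sum_range_succ, Finset.sum_range_succ]
      have hmid : coeffA (q:ℂ) (κ:ℂ) m h * orbitSum (lam.1 - (h:ℤ)) (lam.2 + (h:ℤ)) t₁ t₂
          = coeffA (q:ℂ) (κ:ℂ) m h * (t₁ ^ (lam.1 - (h:ℤ)) * t₂ ^ (lam.2 + (h:ℤ))) := by
        rw [orbitSum, if_pos (by omega)]
      rw [hmid]
      have hsum : ∀ x ∈ Finset.range h,
          coeffA (q:ℂ) (κ:ℂ) m x * (t₁ ^ (lam.1 - (x:ℤ)) * t₂ ^ (lam.2 + (x:ℤ)))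
          + coeffA (q:ℂ) (κ:ℂ) m ((h+1) + (h - 1 - x)) *
            (t₁ ^ (lam.1 - (((h+1)+(h-1-x) : ℕ) : ℤ)) * t₂ ^ (lam.2 + (((h+1)+(h-1-x) : ℕ) : ℤ)))
          = coeffA (q:ℂ) (κ:ℂ) m x * orbitSum (lam.1 - (x:ℤ)) (lam.2 + (x:ℤ)) t₁ t₂ := by
        intro x hx
        have hx' : x < h := Finset.mem_range.mp hx
        rw [show (h+1) + (h - 1 - x) = m - x by omega,
          hterm t₁ t₂ ht₁ ht₂ x (by omega), orbitSum, if_neg (by omega)]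
        ring
      have hcomb := Finset.sum_congr rfl hsum
      rw [Finset.sum_add_distrib] at hcomb
      linear_combination hcomb
    · -- m = 2h + 1
      have hdiv : m / 2 = h := by omega
      rw [hdiv, show m + 1 = (h+1) + (h+1) by omega, Finset.sum_range_add,
        ← Finset.sum_range_reflect (fun x => coeffA (q:ℂ) (κ:ℂ) m ((h+1) + x) *
          (t₁ ^ (lam.1 - (((h+1)+x : ℕ) : ℤ)) * t₂ ^ (lam.2 + (((h+1)+x : ℕ) : ℤ)))) (h+1),
        ← Finset.sum_add_distrib]
      apply Finset.sum_congr rfl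
      intro x hx
      have hx' : x < h + 1 := Finset.mem_range.mp hx
      rw [show (h+1) + (h + 1 - 1 - x) = m - x by omega,
        hterm t₁ t₂ ht₁ ht₂ x (by omega), orbitSum, if_neg (by omega)]
      ring
end
end
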